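/- Let a, b, c ∈ ℝ and φ(x,y) = x²y + y³ + ax + by + cy². Suppose φ has four pairwise distinct critical points in ℝ², each of which is nondegenerate. Then these are all the critical points of φ; exactly one of them has Morse index 0 (a local minimum), exactly one has Morse index 2 (a local maximum), and exactly two have Morse index 1 (saddle points); moreover, the open line segment joining the local minimum point to the local maximum point intersects the open line segment joining the two saddle points. -/

import Mathlib

set_option maxHeartbeats 1000000

open MvPolynomial Matrix

/-- The Hessian matrix of a polynomial in two real variables at a point. -/
noncomputable def hess2 (f : MvPolynomial (Fin 2) ℝ) (p : Fin 2 → ℝ) :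
    Matrix (Fin 2) (Fin 2) ℝ :=
  Matrix.of fun i j => eval p (pderiv i (pderiv j f))

/-- A point of ℝ² is a critical point of a polynomial in two variables if both
partial derivatives vanish there. -/
def IsCriticalPt2 (f : MvPolynomial (Fin 2) ℝ) (p : Fin 2 → ℝ) : Prop :=
  ∀ i, eval p (pderiv i f) = 0

/-- The Morse index at a point: the number of negative eigenvalues (with multiplicity)
of the Hessian matrix there (junk value 0 if the Hessian is not symmetric). -/
noncomputable def morseIndex2 (f : MvPolynomial (Fin 2) ℝ) (p : Fin 2 → ℝ) : ℕ :=
  if h : (hess2 f p).IsHermitian then {i : Fin 2 | h.eigenvalues i < 0}.ncard else 0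

/-- The polynomial φ(x,y) = x²y + y³ + ax + by + cy². -/
noncomputable def phiPlus (a b c : ℝ) : MvPolynomial (Fin 2) ℝ :=
  X 0 ^ 2 * X 1 + X 1 ^ 3 + C a * X 0 + C b * X 1 + C c * X 1 ^ 2

/-! ### Auxiliary lemmas -/

lemma pt_ext {u v : Fin 2 → ℝ} (h0 : u 0 = v 0) (h1 : u 1 = v 1) : u = v :=
  funext fun l => by fin_cases l; exacts [h0, h1]

lemma crit_iff (a b c : ℝ) (q : Fin 2 → ℝ) :
    IsCriticalPt2 (phiPlus a b c) q ↔
      (2*q 0*q 1 + a = 0 ∧ q 0^2 + 3*q 1^2 + 2*c*q 1 + b = 0) := by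
  constructor
  · intro h
    have h0 := h 0
    have h1 := h 1
    simp [phiPlus, pderiv_mul, pderiv_pow, pderiv_X, pderiv_C] at h0 h1
    constructor <;> nlinarith [h0, h1]
  · rintro ⟨h0, h1⟩ i
    fin_cases i <;>
      simp [phiPlus, pderiv_mul, pderiv_pow, pderiv_X, pderiv_C] <;> nlinarith [h0, h1]

lemma hess_eq (a b c : ℝ) (q : Fin 2 → ℝ) :
    hess2 (phiPlus a b c) q = !![2*q 1, 2*q 0; 2*q 0, 6*q 1 + 2*c] := by
  ext i j
  fin_cases i <;> fin_cases j <;>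
    (simp [hess2, phiPlus, pderiv_mul, pderiv_pow, pderiv_X, pderiv_C,
        show (2:MvPolynomial (Fin 2) ℝ) = C 2 from rfl,
        show (3:MvPolynomial (Fin 2) ℝ) = C 3 from rfl]; try ring)

lemma herm_trace {M : Matrix (Fin 2) (Fin 2) ℝ} (h : M.IsHermitian) :
    M.trace = h.eigenvalues 0 + h.eigenvalues 1 := by
  set U : Matrix (Fin 2) (Fin 2) ℝ := (h.eigenvectorUnitary : Matrix (Fin 2) (Fin 2) ℝ) with hU
  have hst : star U * U = 1 := Unitary.coe_star_mul_self h.eigenvectorUnitary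
  calc M.trace = (U * diagonal (RCLike.ofReal ∘ h.eigenvalues) * star U).trace := by
        conv_lhs => rw [h.spectral_theorem, Unitary.conjStarAlgAut_apply]
    _ = (star U * U * diagonal (RCLike.ofReal ∘ h.eigenvalues)).trace := by
        rw [trace_mul_cycle, mul_assoc]
    _ = h.eigenvalues 0 + h.eigenvalues 1 := by
        rw [hst, one_mul, trace_diagonal, Fin.sum_univ_two]
        norm_num [RCLike.ofReal]

lemma herm_det {M : Matrix (Fin 2) (Fin 2) ℝ} (h : M.IsHermitian) :
    M.det = h.eigenvalues 0 * h.eigenvalues 1 := by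
  rw [h.det_eq_prod_eigenvalues, Fin.prod_univ_two]
  norm_num [RCLike.ofReal]

lemma morse_of_det_neg {f : MvPolynomial (Fin 2) ℝ} {q : Fin 2 → ℝ}
    (h : (hess2 f q).IsHermitian) (hd : (hess2 f q).det < 0) : morseIndex2 f q = 1 := by
  rw [morseIndex2, dif_pos h]
  have hde := herm_det h
  rcases lt_or_ge (h.eigenvalues 0) 0 with h0 | h0
  · have h1 : 0 < h.eigenvalues 1 := by nlinarith
    have : {i : Fin 2 | h.eigenvalues i < 0} = {0} := by
      ext i; fin_cases i <;> simp [h0, not_lt.mpr h1.le]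
    rw [this, Set.ncard_singleton]
  · have h1 : h.eigenvalues 1 < 0 := by nlinarith
    have h0' : 0 < h.eigenvalues 0 := by nlinarith
    have : {i : Fin 2 | h.eigenvalues i < 0} = {1} := by
      ext i; fin_cases i <;> simp [h1, not_lt.mpr h0'.le]
    rw [this, Set.ncard_singleton]

lemma morse_of_det_pos_trace_pos {f : MvPolynomial (Fin 2) ℝ} {q : Fin 2 → ℝ}
    (h : (hess2 f q).IsHermitian) (hd : 0 < (hess2 f q).det)
    (ht : 0 < (hess2 f q).trace) : morseIndex2 f q = 0 := by
  rw [morseIndex2, dif_pos h]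
  have hde := herm_det h
  have htr := herm_trace h
  have h0 : 0 < h.eigenvalues 0 := by nlinarith
  have h1 : 0 < h.eigenvalues 1 := by nlinarith
  have : {i : Fin 2 | h.eigenvalues i < 0} = ∅ := by
    ext i; fin_cases i <;> simp [not_lt.mpr h0.le, not_lt.mpr h1.le]
  rw [this, Set.ncard_empty]

lemma morse_of_det_pos_trace_neg {f : MvPolynomial (Fin 2) ℝ} {q : Fin 2 → ℝ}
    (h : (hess2 f q).IsHermitian) (hd : 0 < (hess2 f q).det)
    (ht : (hess2 f q).trace < 0) : morseIndex2 f q = 2 := by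
  rw [morseIndex2, dif_pos h]
  have hde := herm_det h
  have htr := herm_trace h
  have h0 : h.eigenvalues 0 < 0 := by nlinarith
  have h1 : h.eigenvalues 1 < 0 := by nlinarith
  have : {i : Fin 2 | h.eigenvalues i < 0} = Set.univ := by
    ext i; fin_cases i <;> simp [h0, h1]
  rw [this, Set.ncard_univ]
  simp

lemma isHerm_of_symm {α β γ : ℝ} : (!![α, β; β, γ] : Matrix (Fin 2) (Fin 2) ℝ).IsHermitian := by
  ext i j
  fin_cases i <;> fin_cases j <;>
    simp [conjTranspose, Matrix.transpose, vecHead, vecTail]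

lemma hessHerm (a b c : ℝ) (q : Fin 2 → ℝ) : (hess2 (phiPlus a b c) q).IsHermitian := by
  rw [hess_eq]; exact isHerm_of_symm

lemma det_crit (a b c : ℝ) (q : Fin 2 → ℝ) (h2 : q 0^2 + 3*q 1^2 + 2*c*q 1 + b = 0) :
    (hess2 (phiPlus a b c) q).det = 4*(6*q 1^2+3*c*q 1+b) := by
  rw [hess_eq, det_fin_two_of]
  linear_combination (-4)*h2

lemma trace_crit (a b c : ℝ) (q : Fin 2 → ℝ) :
    (hess2 (phiPlus a b c) q).trace = 8*q 1 + 2*c := by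
  rw [hess_eq, trace_fin_two_of]; ring

lemma midx_saddle (a b c : ℝ) (q : Fin 2 → ℝ)
    (h2 : q 0^2 + 3*q 1^2 + 2*c*q 1 + b = 0)
    (hD : 6*q 1^2+3*c*q 1+b < 0) : morseIndex2 (phiPlus a b c) q = 1 :=
  morse_of_det_neg (hessHerm a b c q) (by rw [det_crit a b c q h2]; linarith)

lemma midx_max (a b c : ℝ) (q : Fin 2 → ℝ)
    (h2 : q 0^2 + 3*q 1^2 + 2*c*q 1 + b = 0)
    (hD : 0 < 6*q 1^2+3*c*q 1+b) (hy : q 1 < 0) : morseIndex2 (phiPlus a b c) q = 2 := by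
  refine morse_of_det_pos_trace_neg (hessHerm a b c q)
    (by rw [det_crit a b c q h2]; linarith) ?_
  rw [trace_crit]
  nlinarith [sq_nonneg (q 0), mul_pos (neg_pos.mpr hy) (neg_pos.mpr hy)]

lemma midx_min (a b c : ℝ) (q : Fin 2 → ℝ)
    (h2 : q 0^2 + 3*q 1^2 + 2*c*q 1 + b = 0)
    (hD : 0 < 6*q 1^2+3*c*q 1+b) (hy : 0 < q 1) : morseIndex2 (phiPlus a b c) q = 0 := by
  refine morse_of_det_pos_trace_pos (hessHerm a b c q)
    (by rw [det_crit a b c q h2]; linarith) ?_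
  rw [trace_crit]
  nlinarith [sq_nonneg (q 0), mul_pos hy hy]

/-- The conclusion of the main theorem, abbreviated. -/
def Concl (a b c : ℝ) (p : Fin 4 → (Fin 2 → ℝ)) : Prop :=
  (∀ q, IsCriticalPt2 (phiPlus a b c) q → ∃ k, q = p k) ∧
    {k : Fin 4 | morseIndex2 (phiPlus a b c) (p k) = 0}.ncard = 1 ∧
    {k : Fin 4 | morseIndex2 (phiPlus a b c) (p k) = 2}.ncard = 1 ∧
    {k : Fin 4 | morseIndex2 (phiPlus a b c) (p k) = 1}.ncard = 2 ∧
    (∀ kmin kmax s t : Fin 4,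
      morseIndex2 (phiPlus a b c) (p kmin) = 0 →
      morseIndex2 (phiPlus a b c) (p kmax) = 2 →
      s ≠ t →
      morseIndex2 (phiPlus a b c) (p s) = 1 →
      morseIndex2 (phiPlus a b c) (p t) = 1 →
      (openSegment ℝ (p kmin) (p kmax) ∩ openSegment ℝ (p s) (p t)).Nonempty)

lemma assemble (a b c : ℝ) (p : Fin 4 → (Fin 2 → ℝ)) (k0 k1 k2 k3 : Fin 4)
    (hcover : ∀ k : Fin 4, k = k0 ∨ k = k1 ∨ k = k2 ∨ k = k3)
    (i0 : morseIndex2 (phiPlus a b c) (p k0) = 2)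
    (i1 : morseIndex2 (phiPlus a b c) (p k1) = 1)
    (i2 : morseIndex2 (phiPlus a b c) (p k2) = 1)
    (i3 : morseIndex2 (phiPlus a b c) (p k3) = 0)
    (h12 : k1 ≠ k2)
    (hcompl : ∀ q, IsCriticalPt2 (phiPlus a b c) q → ∃ k, q = p k)
    (hseg : (openSegment ℝ (p k3) (p k0) ∩ openSegment ℝ (p k1) (p k2)).Nonempty) :
    Concl a b c p := by
  have e0 : ∀ k, morseIndex2 (phiPlus a b c) (p k) = 0 ↔ k = k3 := by
    intro k
    constructor
    · intro h
      rcases hcover k with rfl | rfl | rfl | rfl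
      · exact absurd (i0.symm.trans h) (by norm_num)
      · exact absurd (i1.symm.trans h) (by norm_num)
      · exact absurd (i2.symm.trans h) (by norm_num)
      · rfl
    · intro h; rw [h]; exact i3
  have e2 : ∀ k, morseIndex2 (phiPlus a b c) (p k) = 2 ↔ k = k0 := by
    intro k
    constructor
    · intro h
      rcases hcover k with rfl | rfl | rfl | rfl
      · rfl
      · exact absurd (i1.symm.trans h) (by norm_num)
      · exact absurd (i2.symm.trans h) (by norm_num)
      · exact absurd (i3.symm.trans h) (by norm_num)
    · intro h; rw [h]; exact i0
  have e1 : ∀ k, morseIndex2 (phiPlus a b c) (p k) = 1 ↔ (k = k1 ∨ k = k2) := by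
    intro k
    constructor
    · intro h
      rcases hcover k with rfl | rfl | rfl | rfl
      · exact absurd (i0.symm.trans h) (by norm_num)
      · exact Or.inl rfl
      · exact Or.inr rfl
      · exact absurd (i3.symm.trans h) (by norm_num)
    · rintro (h | h) <;> rw [h]
      · exact i1
      · exact i2
  refine ⟨hcompl, ?_, ?_, ?_, ?_⟩
  · have : {k : Fin 4 | morseIndex2 (phiPlus a b c) (p k) = 0} = {k3} :=
      Set.ext fun k => by rw [Set.mem_setOf_eq, Set.mem_singleton_iff]; exact e0 k
    rw [this, Set.ncard_singleton]
  · have : {k : Fin 4 | morseIndex2 (phiPlus a b c) (p k) = 2} = {k0} :=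
      Set.ext fun k => by rw [Set.mem_setOf_eq, Set.mem_singleton_iff]; exact e2 k
    rw [this, Set.ncard_singleton]
  · have : {k : Fin 4 | morseIndex2 (phiPlus a b c) (p k) = 1} = {k1, k2} :=
      Set.ext fun k => by
        rw [Set.mem_setOf_eq, Set.mem_insert_iff, Set.mem_singleton_iff]; exact e1 k
    rw [this, Set.ncard_pair h12]
  · intro kmin kmax s t h0 h2' hst hs ht
    have hkmin : kmin = k3 := (e0 kmin).mp h0
    have hkmax : kmax = k0 := (e2 kmax).mp h2'
    subst hkmin; subst hkmax
    rcases (e1 s).mp hs with rfl | rfl <;> rcases (e1 t).mp ht with rfl | rfl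
    · exact absurd rfl hst
    · exact hseg
    · rw [openSegment_symm ℝ (p s) (p t)]; exact hseg
    · exact absurd rfl hst

/-! ### Pure real-number lemmas -/

lemma quad_sum {b c u v : ℝ} (hu : 3*u^2+2*c*u+b = 0) (hv : 3*v^2+2*c*v+b = 0)
    (huv : u ≠ v) : 3*(u+v)+2*c = 0 := by
  have h : (u - v) * (3*(u+v)+2*c) = 0 := by linear_combination hu - hv
  exact (mul_eq_zero.mp h).resolve_left (sub_ne_zero.mpr huv)

lemma keyA {b c ya yb xc : ℝ} (hyab : ya ≠ yb)
    (eqa : 3*ya^2+2*c*ya+b = 0) (eqb : 3*yb^2+2*c*yb+b = 0)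
    (eqc : xc^2 + b = 0) (hxc : xc ≠ 0) :
    b < 0 ∧ ya*yb < 0 ∧
    (6*ya^2+3*c*ya+b) = (3/2)*ya*(ya-yb) ∧
    (6*yb^2+3*c*yb+b) = (3/2)*yb*(yb-ya) := by
  have hx2 : 0 < xc^2 := (sq_nonneg xc).lt_of_ne (Ne.symm (pow_ne_zero 2 hxc))
  have hb : b < 0 := by linarith
  have hsum : 3*(ya+yb)+2*c = 0 := quad_sum eqa eqb hyab
  have hb3 : b = 3*(ya*yb) := by linear_combination eqa - ya*hsum
  refine ⟨hb, by linarith, ?_, ?_⟩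
  · linear_combination ((3/2)*ya)*hsum + hb3
  · linear_combination ((3/2)*yb)*hsum + hb3

lemma quartic_root {a b c x y : ℝ} (h1 : 2*x*y + a = 0) (h2 : x^2+3*y^2+2*c*y+b = 0) :
    12*y^4+8*c*y^3+4*b*y^2+a^2 = 0 := by
  linear_combination (4*y^2)*h2 + (a - 2*x*y)*h1

lemma cubic_zero {α β γ δ z0 z1 z2 z3 : ℝ}
    (h01 : z0 ≠ z1) (h02 : z0 ≠ z2) (h03 : z0 ≠ z3)
    (h12 : z1 ≠ z2) (h13 : z1 ≠ z3) (h23 : z2 ≠ z3)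
    (e0 : α*z0^3 + β*z0^2 + γ*z0 + δ = 0)
    (e1 : α*z1^3 + β*z1^2 + γ*z1 + δ = 0)
    (e2 : α*z2^3 + β*z2^2 + γ*z2 + δ = 0)
    (e3 : α*z3^3 + β*z3^2 + γ*z3 + δ = 0) :
    α = 0 ∧ β = 0 ∧ γ = 0 ∧ δ = 0 := by
  have d01 : α*(z0^2+z0*z1+z1^2) + β*(z0+z1) + γ = 0 := by
    have h : (z0 - z1) * (α*(z0^2+z0*z1+z1^2) + β*(z0+z1) + γ) = 0 := by
      linear_combination e0 - e1
    exact (mul_eq_zero.mp h).resolve_left (sub_ne_zero.mpr h01)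
  have d12 : α*(z1^2+z1*z2+z2^2) + β*(z1+z2) + γ = 0 := by
    have h : (z1 - z2) * (α*(z1^2+z1*z2+z2^2) + β*(z1+z2) + γ) = 0 := by
      linear_combination e1 - e2
    exact (mul_eq_zero.mp h).resolve_left (sub_ne_zero.mpr h12)
  have d23 : α*(z2^2+z2*z3+z3^2) + β*(z2+z3) + γ = 0 := by
    have h : (z2 - z3) * (α*(z2^2+z2*z3+z3^2) + β*(z2+z3) + γ) = 0 := by
      linear_combination e2 - e3
    exact (mul_eq_zero.mp h).resolve_left (sub_ne_zero.mpr h23)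
  have dd1 : α*(z0+z1+z2) + β = 0 := by
    have h : (z0 - z2) * (α*(z0+z1+z2) + β) = 0 := by
      linear_combination d01 - d12
    exact (mul_eq_zero.mp h).resolve_left (sub_ne_zero.mpr h02)
  have dd2 : α*(z1+z2+z3) + β = 0 := by
    have h : (z1 - z3) * (α*(z1+z2+z3) + β) = 0 := by
      linear_combination d12 - d23
    exact (mul_eq_zero.mp h).resolve_left (sub_ne_zero.mpr h13)
  have hA : α = 0 := by
    have h : (z0 - z3) * α = 0 := by linear_combination dd1 - dd2
    exact (mul_eq_zero.mp h).resolve_left (sub_ne_zero.mpr h03)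
  have hB : β = 0 := by linear_combination dd1 - (z0+z1+z2) * hA
  have hC : γ = 0 := by
    linear_combination d01 - (z0^2+z0*z1+z1^2) * hA - (z0+z1) * hB
  have hD : δ = 0 := by linear_combination e0 - z0^3 * hA - z0^2 * hB - z0 * hC
  exact ⟨hA, hB, hC, hD⟩

lemma sign_helper {z0 z1 z2 z3 : ℝ} (h01 : z0 < z1) (h12 : z1 < z2) (h23 : z2 < z3)
    (h1 : z1 ≠ 0) (h2 : z2 ≠ 0)
    (hp : 0 < z0*z1*z2*z3)
    (hg : z0*z1*z2+z0*z1*z3+z0*z2*z3+z1*z2*z3 = 0) : z1 < 0 ∧ 0 < z2 := by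
  constructor
  · rcases lt_or_gt_of_ne h1 with h | h
    · exact h
    · exfalso
      have h2p : 0 < z2 := lt_trans h h12
      have h3p : 0 < z3 := lt_trans h2p h23
      have h0p : 0 < z0 := by nlinarith [mul_pos (mul_pos h h2p) h3p]
      nlinarith [mul_pos (mul_pos h0p h) h2p, mul_pos (mul_pos h0p h) h3p,
        mul_pos (mul_pos h0p h2p) h3p, mul_pos (mul_pos h h2p) h3p]
  · rcases lt_or_gt_of_ne h2 with h | h
    · exfalso
      have h1n : z1 < 0 := lt_trans h12 h
      have h0n : z0 < 0 := lt_trans h01 h1n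
      have h3 : z3 < 0 := by
        nlinarith [mul_pos (mul_pos (neg_pos.mpr h0n) (neg_pos.mpr h1n)) (neg_pos.mpr h)]
      nlinarith [mul_pos (mul_pos (neg_pos.mpr h0n) (neg_pos.mpr h1n)) (neg_pos.mpr h),
        mul_pos (mul_pos (neg_pos.mpr h0n) (neg_pos.mpr h1n)) (neg_pos.mpr h3),
        mul_pos (mul_pos (neg_pos.mpr h0n) (neg_pos.mpr h)) (neg_pos.mpr h3),
        mul_pos (mul_pos (neg_pos.mpr h1n) (neg_pos.mpr h)) (neg_pos.mpr h3)]
    · exact h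

lemma Dpos_helper0 {z0 z1 z2 z3 D : ℝ} (h01 : z0 < z1) (h02 : z0 < z2) (h03 : z0 < z3)
    (hz : z0 < 0) (key : 8*z0*D = 12*(z0-z1)*(z0-z2)*(z0-z3)) : 0 < D := by
  nlinarith [mul_pos (mul_pos (sub_pos.mpr h01) (sub_pos.mpr h02)) (sub_pos.mpr h03)]

lemma Dneg_helper1 {z0 z1 z2 z3 D : ℝ} (h01 : z0 < z1) (h12 : z1 < z2) (h13 : z1 < z3)
    (hz : z1 < 0) (key : 8*z1*D = 12*(z1-z0)*(z1-z2)*(z1-z3)) : D < 0 := by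
  nlinarith [mul_pos (mul_pos (sub_pos.mpr h01) (sub_pos.mpr h12)) (sub_pos.mpr h13)]

lemma Dneg_helper2 {z0 z1 z2 z3 D : ℝ} (h02 : z0 < z2) (h12 : z1 < z2) (h23 : z2 < z3)
    (hz : 0 < z2) (key : 8*z2*D = 12*(z2-z0)*(z2-z1)*(z2-z3)) : D < 0 := by
  nlinarith [mul_pos (mul_pos (sub_pos.mpr h02) (sub_pos.mpr h12)) (sub_pos.mpr h23)]

lemma Dpos_helper3 {z0 z1 z2 z3 D : ℝ} (h03 : z0 < z3) (h13 : z1 < z3) (h23 : z2 < z3)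
    (hz : 0 < z3) (key : 8*z3*D = 12*(z3-z0)*(z3-z1)*(z3-z2)) : 0 < D := by
  nlinarith [mul_pos (mul_pos (sub_pos.mpr h03) (sub_pos.mpr h13)) (sub_pos.mpr h23)]

lemma segB {a z0 z1 z2 z3 x0 x1 x2 x3 : ℝ}
    (h01 : z0 < z1) (h12 : z1 < z2) (h23 : z2 < z3)
    (hz1 : z1 < 0) (hz2 : 0 < z2)
    (hz0ne : z0 ≠ 0) (hz1ne : z1 ≠ 0) (hz2ne : z2 ≠ 0) (hz3ne : z3 ≠ 0)
    (e10 : 2*x0*z0+a=0) (e11 : 2*x1*z1+a=0) (e12 : 2*x2*z2+a=0) (e13 : 2*x3*z3+a=0) :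
    ∃ lam mu : ℝ, 0<lam ∧ lam<1 ∧ 0 < mu ∧ mu<1 ∧
      (1-lam)*x3+lam*x0 = (1-mu)*x1+mu*x2 ∧
      (1-lam)*z3+lam*z0 = (1-mu)*z1+mu*z2 := by
  have hz0 : z0 < 0 := lt_trans h01 hz1
  have hz3 : 0 < z3 := lt_trans hz2 h23
  have h02 : z0 < z2 := lt_trans h01 h12
  have h03 : z0 < z3 := lt_trans h02 h23
  have h13 : z1 < z3 := lt_trans h12 h23
  have hW : 0 < z1*z2 - z0*z3 := by
    nlinarith [mul_pos (neg_pos.mpr hz0) (sub_pos.mpr h23),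
      mul_pos (sub_pos.mpr h01) hz2]
  have hden1 : 0 < (z3-z0)*(z1*z2 - z0*z3) := mul_pos (sub_pos.mpr h03) hW
  have hden2 : 0 < (z2-z1)*(z1*z2 - z0*z3) := mul_pos (sub_pos.mpr h12) hW
  have hnum1 : 0 < (-z0)*((z3-z1)*(z3-z2)) :=
    mul_pos (neg_pos.mpr hz0) (mul_pos (sub_pos.mpr h13) (sub_pos.mpr h23))
  have hnum2 : 0 < z2*((z1-z0)*(z3-z1)) :=
    mul_pos hz2 (mul_pos (sub_pos.mpr h01) (sub_pos.mpr h13))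
  have hWne : z1*z2 - z0*z3 ≠ 0 := ne_of_gt hW
  have h30 : z3 - z0 ≠ 0 := sub_ne_zero.mpr (ne_of_gt h03)
  have h21 : z2 - z1 ≠ 0 := sub_ne_zero.mpr (ne_of_gt h12)
  refine ⟨(-z0)*((z3-z1)*(z3-z2)) / ((z3-z0)*(z1*z2 - z0*z3)),
    z2*((z1-z0)*(z3-z1)) / ((z2-z1)*(z1*z2 - z0*z3)),
    div_pos hnum1 hden1, ?_, div_pos hnum2 hden2, ?_, ?_, ?_⟩
  · rw [div_lt_one hden1]
    nlinarith [mul_pos (mul_pos hz3 (sub_pos.mpr h01)) (sub_pos.mpr h02)]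
  · rw [div_lt_one hden2]
    nlinarith [mul_pos (mul_pos (neg_pos.mpr hz1) (sub_pos.mpr h02)) (sub_pos.mpr h23)]
  · have hx0 : x0 = -a/(2*z0) := by field_simp; linear_combination e10
    have hx1 : x1 = -a/(2*z1) := by field_simp; linear_combination e11
    have hx2 : x2 = -a/(2*z2) := by field_simp; linear_combination e12
    have hx3 : x3 = -a/(2*z3) := by field_simp; linear_combination e13
    rw [hx0, hx1, hx2, hx3]
    field_simp
    ring
  · field_simp
    ring

lemma keyB {a b c z0 z1 z2 z3 x0 x1 x2 x3 : ℝ} (ha : a ≠ 0)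
    (hz01 : z0 < z1) (hz12 : z1 < z2) (hz23 : z2 < z3)
    (e10 : 2*x0*z0+a=0) (e20 : x0^2+3*z0^2+2*c*z0+b=0)
    (e11 : 2*x1*z1+a=0) (e21 : x1^2+3*z1^2+2*c*z1+b=0)
    (e12 : 2*x2*z2+a=0) (e22 : x2^2+3*z2^2+2*c*z2+b=0)
    (e13 : 2*x3*z3+a=0) (e23 : x3^2+3*z3^2+2*c*z3+b=0) :
    (z1 < 0 ∧ 0 < z2) ∧
    (0 < 6*z0^2+3*c*z0+b ∧ 6*z1^2+3*c*z1+b < 0 ∧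
      6*z2^2+3*c*z2+b < 0 ∧ 0 < 6*z3^2+3*c*z3+b) ∧
    (∀ u v : ℝ, 2*u*v+a=0 → u^2+3*v^2+2*c*v+b=0 →
      (u=x0∧v=z0) ∨ (u=x1∧v=z1) ∨ (u=x2∧v=z2) ∨ (u=x3∧v=z3)) ∧
    (∃ lam mu : ℝ, 0<lam ∧ lam<1 ∧ 0 < mu ∧ mu<1 ∧
      (1-lam)*x3+lam*x0 = (1-mu)*x1+mu*x2 ∧
      (1-lam)*z3+lam*z0 = (1-mu)*z1+mu*z2) := by
  have hz02 : z0 < z2 := hz01.trans hz12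
  have hz03 : z0 < z3 := hz02.trans hz23
  have hz13 : z1 < z3 := hz12.trans hz23
  have hg0 := quartic_root e10 e20
  have hg1 := quartic_root e11 e21
  have hg2 := quartic_root e12 e22
  have hg3 := quartic_root e13 e23
  have hz0ne : z0 ≠ 0 := fun h => ha (by rw [h] at e10; linarith)
  have hz1ne : z1 ≠ 0 := fun h => ha (by rw [h] at e11; linarith)
  have hz2ne : z2 ≠ 0 := fun h => ha (by rw [h] at e12; linarith)
  have hz3ne : z3 ≠ 0 := fun h => ha (by rw [h] at e13; linarith)
  have ec0 : (8*c+12*(z0+z1+z2+z3))*z0^3 +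
      (4*b-12*(z0*z1+z0*z2+z0*z3+z1*z2+z1*z3+z2*z3))*z0^2 +
      (12*(z0*z1*z2+z0*z1*z3+z0*z2*z3+z1*z2*z3))*z0 + (a^2-12*(z0*z1*z2*z3)) = 0 := by
    linear_combination hg0
  have ec1 : (8*c+12*(z0+z1+z2+z3))*z1^3 +
      (4*b-12*(z0*z1+z0*z2+z0*z3+z1*z2+z1*z3+z2*z3))*z1^2 +
      (12*(z0*z1*z2+z0*z1*z3+z0*z2*z3+z1*z2*z3))*z1 + (a^2-12*(z0*z1*z2*z3)) = 0 := by
    linear_combination hg1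
  have ec2 : (8*c+12*(z0+z1+z2+z3))*z2^3 +
      (4*b-12*(z0*z1+z0*z2+z0*z3+z1*z2+z1*z3+z2*z3))*z2^2 +
      (12*(z0*z1*z2+z0*z1*z3+z0*z2*z3+z1*z2*z3))*z2 + (a^2-12*(z0*z1*z2*z3)) = 0 := by
    linear_combination hg2
  have ec3 : (8*c+12*(z0+z1+z2+z3))*z3^3 +
      (4*b-12*(z0*z1+z0*z2+z0*z3+z1*z2+z1*z3+z2*z3))*z3^2 +
      (12*(z0*z1*z2+z0*z1*z3+z0*z2*z3+z1*z2*z3))*z3 + (a^2-12*(z0*z1*z2*z3)) = 0 := by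
    linear_combination hg3
  obtain ⟨hα, hβ, hγ, hδ⟩ := cubic_zero (ne_of_lt hz01) (ne_of_lt hz02) (ne_of_lt hz03)
      (ne_of_lt hz12) (ne_of_lt hz13) (ne_of_lt hz23) ec0 ec1 ec2 ec3
  have ha2 : 0 < a^2 := by positivity
  have hprod : 0 < z0*z1*z2*z3 := by linarith
  have hg' : z0*z1*z2+z0*z1*z3+z0*z2*z3+z1*z2*z3 = 0 := by linarith
  obtain ⟨hz1neg, hz2pos⟩ := sign_helper hz01 hz12 hz23 hz1ne hz2ne hprod hg'
  have hz0neg : z0 < 0 := hz01.trans hz1neg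
  have hz3pos : 0 < z3 := hz2pos.trans hz23
  have key0 : 8*z0*(6*z0^2+3*c*z0+b) = 12*(z0-z1)*(z0-z2)*(z0-z3) := by
    linear_combination (3*z0^2)*hα + (2*z0)*hβ + hγ
  have key1 : 8*z1*(6*z1^2+3*c*z1+b) = 12*(z1-z0)*(z1-z2)*(z1-z3) := by
    linear_combination (3*z1^2)*hα + (2*z1)*hβ + hγ
  have key2 : 8*z2*(6*z2^2+3*c*z2+b) = 12*(z2-z0)*(z2-z1)*(z2-z3) := by
    linear_combination (3*z2^2)*hα + (2*z2)*hβ + hγ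
  have key3 : 8*z3*(6*z3^2+3*c*z3+b) = 12*(z3-z0)*(z3-z1)*(z3-z2) := by
    linear_combination (3*z3^2)*hα + (2*z3)*hβ + hγ
  refine ⟨⟨hz1neg, hz2pos⟩,
    ⟨Dpos_helper0 hz01 hz02 hz03 hz0neg key0,
     Dneg_helper1 hz01 hz12 hz13 hz1neg key1,
     Dneg_helper2 hz02 hz12 hz23 hz2pos key2,
     Dpos_helper3 hz03 hz13 hz23 hz3pos key3⟩, ?_,
    segB hz01 hz12 hz23 hz1neg hz2pos hz0ne hz1ne hz2ne hz3ne e10 e11 e12 e13⟩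
  intro u v h1 h2
  have hgv := quartic_root h1 h2
  have h12' : 12*((v-z0)*(v-z1)*(v-z2)*(v-z3)) = 0 := by
    linear_combination hgv - (v^3)*hα - (v^2)*hβ - v*hγ - hδ
  have hvne : (v-z0)*(v-z1)*(v-z2)*(v-z3) = 0 := by linarith
  have hx : ∀ zi xi : ℝ, zi ≠ 0 → 2*xi*zi+a = 0 → v = zi → u = xi := by
    intro zi xi hzi hei hv
    subst hv
    have h : (u - xi) * (2*v) = 0 := by linear_combination h1 - hei
    rcases mul_eq_zero.mp h with h | h
    · linarith [sub_eq_zero.mp h]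
    · exact absurd (by linarith : v = 0) hzi
  rcases mul_eq_zero.mp hvne with h | h
  · rcases mul_eq_zero.mp h with h' | h'
    · rcases mul_eq_zero.mp h' with h'' | h''
      · have hv := sub_eq_zero.mp h''
        exact Or.inl ⟨hx z0 x0 hz0ne e10 hv, hv⟩
      · have hv := sub_eq_zero.mp h''
        exact Or.inr (Or.inl ⟨hx z1 x1 hz1ne e11 hv, hv⟩)
    · have hv := sub_eq_zero.mp h'
      exact Or.inr (Or.inr (Or.inl ⟨hx z2 x2 hz2ne e12 hv, hv⟩))
  · have hv := sub_eq_zero.mp h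
    exact Or.inr (Or.inr (Or.inr ⟨hx z3 x3 hz3ne e13 hv, hv⟩))

lemma caseB (a b c : ℝ) (ha : a ≠ 0) (p : Fin 4 → (Fin 2 → ℝ))
    (hinj : Function.Injective p)
    (hcrit : ∀ k, IsCriticalPt2 (phiPlus a b c) (p k)) : Concl a b c p := by
  have h1 : ∀ k, 2*p k 0*p k 1 + a = 0 := fun k => ((crit_iff a b c (p k)).mp (hcrit k)).1
  have h2 : ∀ k, p k 0^2 + 3*p k 1^2 + 2*c*p k 1 + b = 0 :=
    fun k => ((crit_iff a b c (p k)).mp (hcrit k)).2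
  have hy0 : ∀ k, p k 1 ≠ 0 := fun k h => ha (by have := h1 k; rw [h] at this; linarith)
  have hyinj : ∀ j k : Fin 4, p j 1 = p k 1 → j = k := by
    intro j k h
    have hj := h1 j
    have hk := h1 k
    rw [h] at hj
    have h5 : (p j 0 - p k 0) * (2 * p k 1) = 0 := by linear_combination hj - hk
    rcases mul_eq_zero.mp h5 with h6 | h6
    · exact hinj (pt_ext (sub_eq_zero.mp h6) h)
    · exact absurd (by linarith : p k 1 = 0) (hy0 k)
  set σ := Tuple.sort (fun k => p k 1) with hσdef
  have hmono : StrictMono ((fun k => p k 1) ∘ σ) :=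
    (Tuple.monotone_sort (fun k => p k 1)).strictMono_of_injective
      (Function.Injective.comp (fun x y h => hyinj x y h) σ.injective)
  have hz01 : p (σ 0) 1 < p (σ 1) 1 := hmono (show (0:Fin 4) < 1 by decide)
  have hz12 : p (σ 1) 1 < p (σ 2) 1 := hmono (show (1:Fin 4) < 2 by decide)
  have hz23 : p (σ 2) 1 < p (σ 3) 1 := hmono (show (2:Fin 4) < 3 by decide)
  obtain ⟨⟨hz1neg, hz2pos⟩, ⟨hD0, hD1, hD2, hD3⟩, hcomp,
      lam, mu, hl0, hl1, hm0, hm1, hxeq, hzeq⟩ :=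
    keyB ha hz01 hz12 hz23 (h1 (σ 0)) (h2 (σ 0)) (h1 (σ 1)) (h2 (σ 1))
      (h1 (σ 2)) (h2 (σ 2)) (h1 (σ 3)) (h2 (σ 3))
  have hz0neg : p (σ 0) 1 < 0 := hz01.trans hz1neg
  have hz3pos : 0 < p (σ 3) 1 := hz2pos.trans hz23
  have i0 : morseIndex2 (phiPlus a b c) (p (σ 0)) = 2 :=
    midx_max a b c (p (σ 0)) (h2 (σ 0)) hD0 hz0neg
  have i1 : morseIndex2 (phiPlus a b c) (p (σ 1)) = 1 :=
    midx_saddle a b c (p (σ 1)) (h2 (σ 1)) hD1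
  have i2 : morseIndex2 (phiPlus a b c) (p (σ 2)) = 1 :=
    midx_saddle a b c (p (σ 2)) (h2 (σ 2)) hD2
  have i3 : morseIndex2 (phiPlus a b c) (p (σ 3)) = 0 :=
    midx_min a b c (p (σ 3)) (h2 (σ 3)) hD3 hz3pos
  refine assemble a b c p (σ 0) (σ 1) (σ 2) (σ 3) ?_ i0 i1 i2 i3
    (fun h => absurd (σ.injective h) (by decide)) ?_ ?_
  · intro k
    have hk := (σ.apply_symm_apply k).symm
    have h4 : σ.symm k = 0 ∨ σ.symm k = 1 ∨ σ.symm k = 2 ∨ σ.symm k = 3 := by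
      generalize σ.symm k = i; fin_cases i <;> simp
    rcases h4 with h | h | h | h <;> rw [h] at hk
    · exact Or.inl hk
    · exact Or.inr (Or.inl hk)
    · exact Or.inr (Or.inr (Or.inl hk))
    · exact Or.inr (Or.inr (Or.inr hk))
  · intro q hq
    obtain ⟨hq1, hq2⟩ := (crit_iff a b c q).mp hq
    rcases hcomp (q 0) (q 1) hq1 hq2 with ⟨hu, hv⟩ | ⟨hu, hv⟩ | ⟨hu, hv⟩ | ⟨hu, hv⟩
    · exact ⟨σ 0, pt_ext hu hv⟩
    · exact ⟨σ 1, pt_ext hu hv⟩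
    · exact ⟨σ 2, pt_ext hu hv⟩
    · exact ⟨σ 3, pt_ext hu hv⟩
  · refine ⟨(1-lam) • p (σ 3) + lam • p (σ 0),
      ⟨1-lam, lam, by linarith, hl0, by ring, rfl⟩,
      ⟨1-mu, mu, by linarith, hm0, by ring, ?_⟩⟩
    refine pt_ext ?_ ?_ <;>
      simp only [Pi.add_apply, Pi.smul_apply, smul_eq_mul]
    · linarith [hxeq]
    · linarith [hzeq]

lemma caseA_core (b c : ℝ) (p : Fin 4 → (Fin 2 → ℝ))
    (ka kb kc kd : Fin 4)
    (hcover : ∀ k : Fin 4, k = ka ∨ k = kb ∨ k = kc ∨ k = kd)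
    (hkcd : kc ≠ kd)
    (hcrit : ∀ k, IsCriticalPt2 (phiPlus 0 b c) (p k))
    (hxa : p ka 0 = 0) (hxb : p kb 0 = 0) (hyc : p kc 1 = 0) (hyd : p kd 1 = 0)
    (hyab : p ka 1 ≠ p kb 1)
    (hd' : p kd 0 = -(p kc 0))
    (hxcne : p kc 0 ≠ 0)
    (hpos : 0 < p ka 1) : Concl 0 b c p := by
  have hc := fun k => (crit_iff 0 b c (p k)).mp (hcrit k)
  have hqa : 3*(p ka 1)^2+2*c*(p ka 1)+b = 0 := by
    have := (hc ka).2; rw [hxa] at this; linear_combination this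
  have hqb : 3*(p kb 1)^2+2*c*(p kb 1)+b = 0 := by
    have := (hc kb).2; rw [hxb] at this; linear_combination this
  have hqc : (p kc 0)^2 + b = 0 := by
    have := (hc kc).2; rw [hyc] at this; linear_combination this
  have hqd : (p kd 0)^2 + b = 0 := by
    have := (hc kd).2; rw [hyd] at this; linear_combination this
  obtain ⟨hb, hyprod, hDaEq, hDbEq⟩ := keyA hyab hqa hqb hqc hxcne
  have hybneg : p kb 1 < 0 := by nlinarith [hyprod, hpos]
  have hDa : 0 < 6*(p ka 1)^2+3*c*(p ka 1)+b := by rw [hDaEq]; nlinarith [hpos, hybneg]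
  have hDb : 0 < 6*(p kb 1)^2+3*c*(p kb 1)+b := by rw [hDbEq]; nlinarith [hpos, hybneg]
  have hDc : 6*(p kc 1)^2+3*c*(p kc 1)+b < 0 := by rw [hyc]; simpa using hb
  have hDd : 6*(p kd 1)^2+3*c*(p kd 1)+b < 0 := by rw [hyd]; simpa using hb
  have i0 : morseIndex2 (phiPlus 0 b c) (p kb) = 2 :=
    midx_max 0 b c (p kb) ((hc kb).2) hDb hybneg
  have i3 : morseIndex2 (phiPlus 0 b c) (p ka) = 0 :=
    midx_min 0 b c (p ka) ((hc ka).2) hDa hpos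
  have ic : morseIndex2 (phiPlus 0 b c) (p kc) = 1 :=
    midx_saddle 0 b c (p kc) ((hc kc).2) hDc
  have id' : morseIndex2 (phiPlus 0 b c) (p kd) = 1 :=
    midx_saddle 0 b c (p kd) ((hc kd).2) hDd
  refine assemble 0 b c p kb kc kd ka ?_ i0 ic id' i3 hkcd ?_ ?_
  · intro k; rcases hcover k with h | h | h | h <;> tauto
  · intro q hq
    obtain ⟨hq1, hq2⟩ := (crit_iff 0 b c q).mp hq
    have hq0 : q 0 * q 1 = 0 := by linarith [hq1]
    rcases mul_eq_zero.mp hq0 with hx | hy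
    · have hqq : 3*(q 1)^2+2*c*(q 1)+b = 0 := by rw [hx] at hq2; linear_combination hq2
      by_cases hv : q 1 = p ka 1
      · exact ⟨ka, pt_ext (by rw [hx, hxa]) hv⟩
      by_cases hv' : q 1 = p kb 1
      · exact ⟨kb, pt_ext (by rw [hx, hxb]) hv'⟩
      exfalso
      have s1 := quad_sum hqq hqa hv
      have s2 := quad_sum hqq hqb hv'
      exact hyab (by linarith)
    · have hqq : (q 0)^2 + b = 0 := by rw [hy] at hq2; linear_combination hq2
      have hfac : (q 0 - p kc 0)*(q 0 + p kc 0) = 0 := by linear_combination hqq - hqc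
      rcases mul_eq_zero.mp hfac with h | h
      · exact ⟨kc, pt_ext (sub_eq_zero.mp h) (by rw [hy, hyc])⟩
      · refine ⟨kd, pt_ext ?_ (by rw [hy, hyd])⟩
        rw [hd']; linarith
  · have hdne : p ka 1 - p kb 1 ≠ 0 := ne_of_gt (by linarith)
    refine ⟨(0 : Fin 2 → ℝ),
      ⟨(-(p kb 1))/(p ka 1 - p kb 1), (p ka 1)/(p ka 1 - p kb 1),
        div_pos (neg_pos.mpr hybneg) (by linarith), div_pos hpos (by linarith),
        by field_simp; ring, ?_⟩,
      ⟨1/2, 1/2, by norm_num, by norm_num, by norm_num, ?_⟩⟩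
    · refine pt_ext ?_ ?_ <;>
        simp only [Pi.add_apply, Pi.smul_apply, smul_eq_mul, Pi.zero_apply]
      · rw [hxa, hxb]; ring
      · field_simp; ring
    · refine pt_ext ?_ ?_ <;>
        simp only [Pi.add_apply, Pi.smul_apply, smul_eq_mul, Pi.zero_apply]
      · rw [hd']; ring
      · rw [hyc, hyd]; ring

lemma caseA (b c : ℝ) (p : Fin 4 → (Fin 2 → ℝ))
    (hinj : Function.Injective p)
    (hcrit : ∀ k, IsCriticalPt2 (phiPlus 0 b c) (p k))
    (hnd : ∀ k, (hess2 (phiPlus 0 b c) (p k)).det ≠ 0) : Concl 0 b c p := by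
  classical
  have hc := fun k => (crit_iff 0 b c (p k)).mp (hcrit k)
  have h1 : ∀ k, p k 0 * p k 1 = 0 := fun k => by linarith [(hc k).1]
  have h2 : ∀ k, p k 0^2 + 3*p k 1^2 + 2*c*p k 1 + b = 0 := fun k => (hc k).2
  have hDne : ∀ k, 6*p k 1^2+3*c*p k 1+b ≠ 0 := by
    intro k h
    exact hnd k (by rw [det_crit 0 b c (p k) (h2 k), h, mul_zero])
  have hno00 : ∀ k, ¬(p k 0 = 0 ∧ p k 1 = 0) := by
    rintro k ⟨hx, hy⟩
    apply hDne k
    have hb0 : b = 0 := by have := h2 k; rw [hx, hy] at this; linarith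
    rw [hy, hb0]; ring
  set A := Finset.filter (fun k => p k 0 = 0) Finset.univ with hA
  set B := Finset.filter (fun k => p k 1 = 0) Finset.univ with hB
  have hmemA : ∀ k, k ∈ A ↔ p k 0 = 0 := by intro k; simp [hA]
  have hmemB : ∀ k, k ∈ B ↔ p k 1 = 0 := by intro k; simp [hB]
  have hAB : ∀ k, k ∈ A ∨ k ∈ B := by
    intro k
    rcases mul_eq_zero.mp (h1 k) with h | h
    · exact Or.inl ((hmemA k).mpr h)
    · exact Or.inr ((hmemB k).mpr h)
  have hdisj : Disjoint A B := by
    rw [Finset.disjoint_left]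
    intro k hka hkb
    exact hno00 k ⟨(hmemA k).mp hka, (hmemB k).mp hkb⟩
  have hptx : ∀ j k, p j 0 = 0 → p k 0 = 0 → p j 1 = p k 1 → j = k := by
    intro j k hj hk h
    exact hinj (pt_ext (by rw [hj, hk]) h)
  have hcardA : A.card ≤ 2 := by
    by_contra hcard
    push_neg at hcard
    obtain ⟨t, hts, htc⟩ := Finset.exists_subset_card_eq (show 3 ≤ A.card by omega)
    obtain ⟨i, j, k, hij, hik, hjk, rfl⟩ := Finset.card_eq_three.mp htc
    have hxi := (hmemA i).mp (hts (by simp))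
    have hxj := (hmemA j).mp (hts (by simp))
    have hxk := (hmemA k).mp (hts (by simp))
    have qi : 3*(p i 1)^2+2*c*(p i 1)+b = 0 := by
      have := h2 i; rw [hxi] at this; linear_combination this
    have qj : 3*(p j 1)^2+2*c*(p j 1)+b = 0 := by
      have := h2 j; rw [hxj] at this; linear_combination this
    have qk : 3*(p k 1)^2+2*c*(p k 1)+b = 0 := by
      have := h2 k; rw [hxk] at this; linear_combination this
    have hyij : p i 1 ≠ p j 1 := fun h => hij (hptx i j hxi hxj h)
    have hyik : p i 1 ≠ p k 1 := fun h => hik (hptx i k hxi hxk h)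
    have s1 := quad_sum qi qj hyij
    have s2 := quad_sum qi qk hyik
    exact hjk (hptx j k hxj hxk (by linarith))
  have hcardB : B.card ≤ 2 := by
    by_contra hcard
    push_neg at hcard
    obtain ⟨t, hts, htc⟩ := Finset.exists_subset_card_eq (show 3 ≤ B.card by omega)
    obtain ⟨i, j, k, hij, hik, hjk, rfl⟩ := Finset.card_eq_three.mp htc
    have hyi := (hmemB i).mp (hts (by simp))
    have hyj := (hmemB j).mp (hts (by simp))
    have hyk := (hmemB k).mp (hts (by simp))
    have qi : (p i 0)^2 + b = 0 := by
      have := h2 i; rw [hyi] at this; linear_combination this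
    have qj : (p j 0)^2 + b = 0 := by
      have := h2 j; rw [hyj] at this; linear_combination this
    have qk : (p k 0)^2 + b = 0 := by
      have := h2 k; rw [hyk] at this; linear_combination this
    have hxij : p i 0 ≠ p j 0 := fun h => hij (hinj (pt_ext h (by rw [hyi, hyj])))
    have hxik : p i 0 ≠ p k 0 := fun h => hik (hinj (pt_ext h (by rw [hyi, hyk])))
    have hj' : p j 0 = -(p i 0) := by
      rcases mul_eq_zero.mp (show (p i 0 - p j 0)*(p i 0 + p j 0) = 0 by
        linear_combination qi - qj) with h | h
      · exact absurd (sub_eq_zero.mp h).symm hxij.symm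
      · linarith
    have hk' : p k 0 = -(p i 0) := by
      rcases mul_eq_zero.mp (show (p i 0 - p k 0)*(p i 0 + p k 0) = 0 by
        linear_combination qi - qk) with h | h
      · exact absurd (sub_eq_zero.mp h).symm hxik.symm
      · linarith
    exact hjk (hinj (pt_ext (by rw [hj', hk']) (by rw [hyj, hyk])))
  have hcards : A.card = 2 ∧ B.card = 2 := by
    have hun : (A ∪ B).card = A.card + B.card := Finset.card_union_of_disjoint hdisj
    have huniv : A ∪ B = Finset.univ := by
      apply Finset.eq_univ_iff_forall.mpr
      intro k
      rcases hAB k with h | h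
      · exact Finset.mem_union_left _ h
      · exact Finset.mem_union_right _ h
    rw [huniv, Finset.card_univ, Fintype.card_fin] at hun
    omega
  obtain ⟨ka, kb, hkab, hAeq⟩ := Finset.card_eq_two.mp hcards.1
  obtain ⟨kc, kd, hkcd, hBeq⟩ := Finset.card_eq_two.mp hcards.2
  have hxa : p ka 0 = 0 := (hmemA ka).mp (by rw [hAeq]; simp)
  have hxb : p kb 0 = 0 := (hmemA kb).mp (by rw [hAeq]; simp)
  have hyc : p kc 1 = 0 := (hmemB kc).mp (by rw [hBeq]; simp)
  have hyd : p kd 1 = 0 := (hmemB kd).mp (by rw [hBeq]; simp)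
  have hyab : p ka 1 ≠ p kb 1 := fun h => hkab (hptx ka kb hxa hxb h)
  have hxcne : p kc 0 ≠ 0 := fun h => hno00 kc ⟨h, hyc⟩
  have hqc : (p kc 0)^2 + b = 0 := by
    have := h2 kc; rw [hyc] at this; linear_combination this
  have hqd : (p kd 0)^2 + b = 0 := by
    have := h2 kd; rw [hyd] at this; linear_combination this
  have hxcd : p kc 0 ≠ p kd 0 := fun h => hkcd (hinj (pt_ext h (by rw [hyc, hyd])))
  have hd' : p kd 0 = -(p kc 0) := by
    rcases mul_eq_zero.mp (show (p kc 0 - p kd 0)*(p kc 0 + p kd 0) = 0 by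
      linear_combination hqc - hqd) with h | h
    · exact absurd (sub_eq_zero.mp h) hxcd
    · linarith
  have hcover : ∀ k : Fin 4, k = ka ∨ k = kb ∨ k = kc ∨ k = kd := by
    intro k
    rcases hAB k with h | h
    · rw [hAeq] at h
      rcases Finset.mem_insert.mp h with h | h
      · exact Or.inl h
      · exact Or.inr (Or.inl (Finset.mem_singleton.mp h))
    · rw [hBeq] at h
      rcases Finset.mem_insert.mp h with h | h
      · exact Or.inr (Or.inr (Or.inl h))
      · exact Or.inr (Or.inr (Or.inr (Finset.mem_singleton.mp h)))
  have hqa : 3*(p ka 1)^2+2*c*(p ka 1)+b = 0 := by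
    have := h2 ka; rw [hxa] at this; linear_combination this
  have hqb : 3*(p kb 1)^2+2*c*(p kb 1)+b = 0 := by
    have := h2 kb; rw [hxb] at this; linear_combination this
  obtain ⟨hb, hyprod, _, _⟩ := keyA hyab hqa hqb hqc hxcne
  have hyane : p ka 1 ≠ 0 := by
    intro h; rw [h] at hyprod; simp at hyprod
  rcases lt_or_gt_of_ne hyane with hneg | hpos
  · have hposb : 0 < p kb 1 := by nlinarith [hyprod]
    exact caseA_core b c p kb ka kc kd
      (fun k => by rcases hcover k with h | h | h | h <;> tauto) hkcd hcrit
      hxb hxa hyc hyd (Ne.symm hyab) hd' hxcne hposb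
  · exact caseA_core b c p ka kb kc kd hcover hkcd hcrit
      hxa hxb hyc hyd hyab hd' hxcne hpos

/-- If φ(x,y) = x²y + y³ + ax + by + cy² has four pairwise distinct nondegenerate
critical points, then these are all its critical points, exactly one is a local
minimum (index 0), exactly one a local maximum (index 2), exactly two are saddles
(index 1), and the open segment joining the minimum to the maximum meets the open
segment joining the two saddles. -/
theorem phiPlus_four_critical_points (a b c : ℝ)
    (p : Fin 4 → (Fin 2 → ℝ)) (hinj : Function.Injective p)
    (hcrit : ∀ k, IsCriticalPt2 (phiPlus a b c) (p k))
    (hnd : ∀ k, (hess2 (phiPlus a b c) (p k)).det ≠ 0) :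
    (∀ q, IsCriticalPt2 (phiPlus a b c) q → ∃ k, q = p k) ∧
    {k : Fin 4 | morseIndex2 (phiPlus a b c) (p k) = 0}.ncard = 1 ∧
    {k : Fin 4 | morseIndex2 (phiPlus a b c) (p k) = 2}.ncard = 1 ∧
    {k : Fin 4 | morseIndex2 (phiPlus a b c) (p k) = 1}.ncard = 2 ∧
    (∀ kmin kmax s t : Fin 4,
      morseIndex2 (phiPlus a b c) (p kmin) = 0 →
      morseIndex2 (phiPlus a b c) (p kmax) = 2 →
      s ≠ t →
      morseIndex2 (phiPlus a b c) (p s) = 1 →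
      morseIndex2 (phiPlus a b c) (p t) = 1 →
      (openSegment ℝ (p kmin) (p kmax) ∩ openSegment ℝ (p s) (p t)).Nonempty) := by
  rcases eq_or_ne a 0 with rfl | ha
  · exact caseA b c p hinj hcrit hnd
  · exact caseB a b c ha p hinj hcrit
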